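/- Let M be an ℓ×ℓ real symmetric positive definite matrix partitioned into blocks M_vv (n×n), M_vh, M_hv = M_vhᵀ, M_hh, let Q_vv be an n×n real symmetric positive definite matrix, and let Q* be the completed matrix with blocks Q_vv, Q_vv (M_vv)⁻¹ M_vh, its transpose, and M_{h|v} + M_hv (M_vv)⁻¹ Q_vv (M_vv)⁻¹ M_vh, where M_{h|v} := M_hh − M_hv (M_vv)⁻¹ M_vh. Then KL(Q*, M) = (1/2)[Tr((M_vv)⁻¹ Q_vv) + log det M_vv − log det Q_vv − n]; that is, the minimized ℓ-dimensional KL divergence equals the KL divergence of the visible n×n blocks. -/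

import Mathlib

open Matrix Real

/-- The matrix Kullback–Leibler divergence
`KL(Q, M) := (1/2)[Tr(M⁻¹Q) + log det M − log det Q − ℓ]`,
where `ℓ` is the size of the matrices. -/
noncomputable def matKL {ι : Type*} [Fintype ι] [DecidableEq ι]
    (Q M : Matrix ι ι ℝ) : ℝ :=
  (1 / 2) * ((M⁻¹ * Q).trace + Real.log M.det - Real.log Q.det - Fintype.card ι)

lemma trace_fromBlocks' {n m : ℕ} (A : Matrix (Fin n) (Fin n) ℝ) (B : Matrix (Fin n) (Fin m) ℝ)
    (C : Matrix (Fin m) (Fin n) ℝ) (D : Matrix (Fin m) (Fin m) ℝ) :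
    (Matrix.fromBlocks A B C D).trace = A.trace + D.trace := by
  simp [Matrix.trace, Matrix.diag, Fintype.sum_sum_type]

lemma posDef_toBlocks₁₁' {n m : ℕ} {M : Matrix (Fin n ⊕ Fin m) (Fin n ⊕ Fin m) ℝ}
    (hM : M.PosDef) : M.toBlocks₁₁.PosDef := by
  rw [posDef_iff_dotProduct_mulVec]
  constructor
  · have h := hM.1
    ext i j
    have := congrFun (congrFun h (Sum.inl i)) (Sum.inl j)
    simpa [Matrix.conjTranspose_apply, Matrix.toBlocks₁₁] using this
  · intro x hx
    have hy : (Sum.elim x (0 : Fin m → ℝ)) ≠ 0 := by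
      intro h
      exact hx (funext fun i => congrFun h (Sum.inl i))
    have h2 := hM.dotProduct_mulVec_pos hy
    convert h2 using 1
    simp [dotProduct, mulVec, Fintype.sum_sum_type, Matrix.toBlocks₁₁, mul_comm]

theorem stmt7 {n m : ℕ}
    (M : Matrix (Fin n ⊕ Fin m) (Fin n ⊕ Fin m) ℝ) (hM : M.PosDef)
    (Qvv : Matrix (Fin n) (Fin n) ℝ) (hQvv : Qvv.PosDef)
    (Qstar : Matrix (Fin n ⊕ Fin m) (Fin n ⊕ Fin m) ℝ)
    (hQstar : Qstar =
      Matrix.fromBlocks Qvv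
        (Qvv * (M.toBlocks₁₁)⁻¹ * M.toBlocks₁₂)
        ((Qvv * (M.toBlocks₁₁)⁻¹ * M.toBlocks₁₂)ᵀ)
        ((M.toBlocks₂₂ - M.toBlocks₂₁ * (M.toBlocks₁₁)⁻¹ * M.toBlocks₁₂)
          + M.toBlocks₂₁ * (M.toBlocks₁₁)⁻¹ * Qvv * (M.toBlocks₁₁)⁻¹ * M.toBlocks₁₂)) :
    matKL Qstar M
      = (1 / 2) * (((M.toBlocks₁₁)⁻¹ * Qvv).trace
          + Real.log (M.toBlocks₁₁).det - Real.log Qvv.det - n) := by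
  have hC : M.toBlocks₂₁ = (M.toBlocks₁₂)ᵀ := by
    ext i j
    have := congrFun (congrFun hM.1 (Sum.inr i)) (Sum.inl j)
    simpa [Matrix.conjTranspose_apply, Matrix.toBlocks₂₁, Matrix.toBlocks₁₂] using this.symm
  set A := M.toBlocks₁₁ with hA'
  set B := M.toBlocks₁₂ with hB'
  set D := M.toBlocks₂₂ with hD'
  rw [hC] at hQstar
  set S : Matrix (Fin m) (Fin m) ℝ := D - Bᵀ * A⁻¹ * B with hS'
  have hA : A.PosDef := posDef_toBlocks₁₁' hM
  haveI : Invertible A := A.invertibleOfIsUnitDet hA.det_pos.ne'.isUnit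
  haveI : Invertible Qvv := Qvv.invertibleOfIsUnitDet hQvv.det_pos.ne'.isUnit
  have hMfb : M = Matrix.fromBlocks A B Bᵀ D := by
    rw [hA', hB', hD', ← hC, Matrix.fromBlocks_toBlocks]
  have hA1 : A * A⁻¹ = 1 := Matrix.mul_nonsing_inv A hA.det_pos.ne'.isUnit
  have hA2 : A⁻¹ * A = 1 := Matrix.nonsing_inv_mul A hA.det_pos.ne'.isUnit
  have hAT : Aᵀ = A := by
    ext i j
    simpa using congrFun (congrFun hA.1 i) j
  have hQT : Qvvᵀ = Qvv := by
    ext i j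
    simpa using congrFun (congrFun hQvv.1 i) j
  have hAinvT : (A⁻¹)ᵀ = A⁻¹ := by rw [Matrix.transpose_nonsing_inv, hAT]
  have hdetM : M.det = A.det * S.det := by
    rw [hMfb, Matrix.det_fromBlocks₁₁, invOf_eq_nonsing_inv]
  have hSdet : 0 < S.det := by
    have h := hM.det_pos
    rw [hdetM] at h
    nlinarith [hA.det_pos]
  haveI : Invertible S := S.invertibleOfIsUnitDet hSdet.ne'.isUnit
  have hS1 : S * S⁻¹ = 1 := Matrix.mul_nonsing_inv S hSdet.ne'.isUnit
  have hS2 : S⁻¹ * S = 1 := Matrix.nonsing_inv_mul S hSdet.ne'.isUnit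
  have key : Bᵀ * A⁻¹ * B = D - S := by rw [hS', sub_sub_cancel]
  set N : Matrix (Fin n ⊕ Fin m) (Fin n ⊕ Fin m) ℝ :=
    Matrix.fromBlocks (A⁻¹ + A⁻¹ * B * S⁻¹ * Bᵀ * A⁻¹) (-(A⁻¹ * B * S⁻¹))
      (-(S⁻¹ * Bᵀ * A⁻¹)) S⁻¹ with hN'
  have hMN : M * N = 1 := by
    rw [hMfb, hN', Matrix.fromBlocks_multiply, ← Matrix.fromBlocks_one]
    have hTL : A * (A⁻¹ + A⁻¹ * B * S⁻¹ * Bᵀ * A⁻¹) + B * -(S⁻¹ * Bᵀ * A⁻¹) = 1 := by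
      simp only [Matrix.mul_add, Matrix.mul_neg, ← Matrix.mul_assoc, hA1, Matrix.one_mul]
      abel
    have hTR : A * -(A⁻¹ * B * S⁻¹) + B * S⁻¹ = 0 := by
      simp only [Matrix.mul_neg, ← Matrix.mul_assoc, hA1, Matrix.one_mul]
      abel
    have hBL : Bᵀ * (A⁻¹ + A⁻¹ * B * S⁻¹ * Bᵀ * A⁻¹) + D * -(S⁻¹ * Bᵀ * A⁻¹) = 0 := by
      simp only [Matrix.mul_add, Matrix.mul_neg, ← Matrix.mul_assoc, key,
        Matrix.sub_mul, hS1, Matrix.one_mul]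
      abel
    have hBR : Bᵀ * -(A⁻¹ * B * S⁻¹) + D * S⁻¹ = 1 := by
      simp only [Matrix.mul_neg, ← Matrix.mul_assoc, key, Matrix.sub_mul, hS1]
      abel
    rw [hTL, hTR, hBL, hBR]
  have hMinv : M⁻¹ = N := Matrix.inv_eq_right_inv hMN
  have hTT : (Qvv * A⁻¹ * B)ᵀ = Bᵀ * A⁻¹ * Qvv := by
    rw [Matrix.transpose_mul, Matrix.transpose_mul, hAinvT, hQT, Matrix.mul_assoc]
  rw [hTT] at hQstar
  -- trace computation
  have htrace : (M⁻¹ * Qstar).trace = (A⁻¹ * Qvv).trace + (m : ℝ) := by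
    rw [hMinv, hQstar, hN', Matrix.fromBlocks_multiply, trace_fromBlocks']
    have h1 : (A⁻¹ + A⁻¹ * B * S⁻¹ * Bᵀ * A⁻¹) * Qvv + -(A⁻¹ * B * S⁻¹) * (Bᵀ * A⁻¹ * Qvv)
        = A⁻¹ * Qvv := by
      simp only [Matrix.add_mul, Matrix.neg_mul, ← Matrix.mul_assoc]
      abel
    have h2 : -(S⁻¹ * Bᵀ * A⁻¹) * (Qvv * A⁻¹ * B)
        + S⁻¹ * (D - Bᵀ * A⁻¹ * B + Bᵀ * A⁻¹ * Qvv * A⁻¹ * B) = 1 := by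
      rw [← hS']
      simp only [Matrix.mul_add, Matrix.neg_mul, ← Matrix.mul_assoc, hS2]
      abel
    rw [h1, h2, Matrix.trace_one]
    simp
  -- determinant of Qstar
  have hdetQ : Qstar.det = Qvv.det * S.det := by
    rw [hQstar, Matrix.det_fromBlocks₁₁, invOf_eq_nonsing_inv]
    congr 1
    have : Bᵀ * A⁻¹ * Qvv * Qvv⁻¹ * (Qvv * A⁻¹ * B) = Bᵀ * A⁻¹ * Qvv * A⁻¹ * B := by
      rw [Matrix.mul_nonsing_inv_cancel_right _ _ hQvv.det_pos.ne'.isUnit]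
      simp only [← Matrix.mul_assoc]
    rw [this, add_sub_cancel_right]
  have hlogM : Real.log M.det = Real.log A.det + Real.log S.det := by
    rw [hdetM, Real.log_mul hA.det_pos.ne' hSdet.ne']
  have hlogQ : Real.log Qstar.det = Real.log Qvv.det + Real.log S.det := by
    rw [hdetQ, Real.log_mul hQvv.det_pos.ne' hSdet.ne']
  rw [matKL, htrace, hlogM, hlogQ]
  simp only [Fintype.card_sum, Fintype.card_fin]
  push_cast
  ring
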